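/- Net maxima approximate the supremum of a uniformly continuous function: Let X be a nonempty metric space, let x : ℕ → X be a sequence and h : ℕ → ℕ a modulus of total boundedness for X with respect to x, let f : X → ℝ, and let g : ℕ → ℕ be a modulus of uniform continuity for f on X. Then the range of f is bounded above, and for every k ≥ 1, writing M_k := max over n ≤ h(g k) of f(x n), one has sSup (Set.range f) − 1/k ≤ M_k ≤ sSup (Set.range f). -/

import Mathlib

/-- Net maxima approximate the supremum of a uniformly continuous function: given a
modulus of total boundedness `h` (with net `x`) for the metric space `X` and a
modulus of uniform continuity `g` for `f : X → ℝ`, the range of `f` is bounded above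
and the maximum `M_k` of `f (x n)` over `n ≤ h (g k)` satisfies
`sSup (range f) − 1/k ≤ M_k ≤ sSup (range f)` for all `k ≥ 1`. -/
theorem net_max_approximates_sSup {X : Type*} [MetricSpace X] [Nonempty X]
    (x : ℕ → X) (h : ℕ → ℕ)
    (htb : ∀ k : ℕ, 1 ≤ k → ∀ p : X, ∃ n ≤ h k, dist (x n) p < 1 / (k : ℝ))
    (f : X → ℝ) (g : ℕ → ℕ)
    (hg1 : ∀ k : ℕ, 1 ≤ k → 1 ≤ g k)
    (hg : ∀ k : ℕ, 1 ≤ k → ∀ p q : X, dist p q < 1 / (g k : ℝ) → |f p - f q| < 1 / (k : ℝ)) :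
    BddAbove (Set.range f) ∧
    ∀ k : ℕ, 1 ≤ k →
      sSup (Set.range f) - 1 / (k : ℝ) ≤
        (Finset.range (h (g k) + 1)).sup' Finset.nonempty_range_add_one (fun n => f (x n)) ∧
      (Finset.range (h (g k) + 1)).sup' Finset.nonempty_range_add_one (fun n => f (x n)) ≤
        sSup (Set.range f) := by
  -- Key: for every k ≥ 1, M_k + 1/k is an upper bound for range f.
  have key : ∀ k : ℕ, 1 ≤ k → ∀ p : X,
      f p ≤ (Finset.range (h (g k) + 1)).sup' Finset.nonempty_range_add_one
        (fun n => f (x n)) + 1 / (k : ℝ) := by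
    intro k hk p
    obtain ⟨n, hn, hd⟩ := htb (g k) (hg1 k hk) p
    have habs := hg k hk (x n) p hd
    have h1 : f p < f (x n) + 1 / (k : ℝ) := by
      have := abs_lt.mp habs
      linarith [this.1]
    have h2 : f (x n) ≤ (Finset.range (h (g k) + 1)).sup'
        Finset.nonempty_range_add_one (fun n => f (x n)) :=
      Finset.le_sup' (fun n => f (x n)) (Finset.mem_range.mpr (Nat.lt_succ_of_le hn))
    linarith
  have hbdd : BddAbove (Set.range f) := by
    refine ⟨(Finset.range (h (g 1) + 1)).sup' Finset.nonempty_range_add_one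
      (fun n => f (x n)) + 1 / (1 : ℝ), ?_⟩
    rintro _ ⟨p, rfl⟩
    simpa using key 1 le_rfl p
  refine ⟨hbdd, fun k hk => ?_⟩
  constructor
  · have hub : sSup (Set.range f) ≤ (Finset.range (h (g k) + 1)).sup'
        Finset.nonempty_range_add_one (fun n => f (x n)) + 1 / (k : ℝ) := by
      apply csSup_le (Set.range_nonempty f)
      rintro _ ⟨p, rfl⟩
      exact key k hk p
    linarith
  · apply Finset.sup'_le
    intro n _
    exact le_csSup hbdd ⟨x n, rfl⟩
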